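/- arXiv:0901.2008 — 2 statements merged into one kernel-verified Lean document; each statement's English description precedes it below -/
import Mathlib

section
/- For k ≤ n, the probability that the elements 1, 2, ..., k all lie in the same cycle of a uniformly random permutation of S_n is 1/k. Equivalently, the number of permutations w in S_n with 1,...,k in the same cycle is n!/k. -/
open Equiv Finset
noncomputable section
attribute [local instance] Classical.propDecidable

namespace ProbAux

variable {n k : ℕ}

/-- The elements of `Fin n` whose value is `< k`. -/
abbrev S (n k : ℕ) := {i : Fin n // (i : ℕ) < k}

lemma exists_return (w : Perm (Fin n)) (x : S n k) :
    ∃ m, 0 < m ∧ (((w ^ m) x.1 : Fin n) : ℕ) < k :=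
  ⟨orderOf w, orderOf_pos w, by simp [pow_orderOf_eq_one, x.2]⟩

/-- First return time to the set. -/
noncomputable def retTime (w : Perm (Fin n)) (x : S n k) : ℕ :=
  Nat.find (exists_return w x)

lemma retTime_pos (w : Perm (Fin n)) (x : S n k) : 0 < retTime w x :=
  (Nat.find_spec (exists_return w x)).1

lemma retTime_mem (w : Perm (Fin n)) (x : S n k) :
    (((w ^ retTime w x) x.1 : Fin n) : ℕ) < k :=
  (Nat.find_spec (exists_return w x)).2

lemma retTime_min (w : Perm (Fin n)) (x : S n k) {m : ℕ} (h1 : 0 < m)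
    (h2 : m < retTime w x) : ¬ (((w ^ m) x.1 : Fin n) : ℕ) < k := fun hmem =>
  Nat.find_min (exists_return w x) h2 ⟨h1, hmem⟩

/-- The first-return map. -/
noncomputable def fr (w : Perm (Fin n)) (x : S n k) : S n k :=
  ⟨(w ^ retTime w x) x.1, retTime_mem w x⟩

lemma retTime_eq (w : Perm (Fin n)) (x : S n k) {b : ℕ} (hb : 0 < b)
    (hmem : (((w ^ b) x.1 : Fin n) : ℕ) < k)
    (hmin : ∀ m, 0 < m → m < b → ¬ (((w ^ m) x.1 : Fin n) : ℕ) < k) :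
    retTime w x = b := by
  have h1 : retTime w x ≤ b := Nat.find_min' _ ⟨hb, hmem⟩
  have h2 : ¬ retTime w x < b := fun h =>
    hmin _ (retTime_pos w x) h (retTime_mem w x)
  omega

lemma fr_eq (w : Perm (Fin n)) (x : S n k) {b : ℕ} (hb : 0 < b)
    (hmem : (((w ^ b) x.1 : Fin n) : ℕ) < k)
    (hmin : ∀ m, 0 < m → m < b → ¬ (((w ^ m) x.1 : Fin n) : ℕ) < k) :
    fr w x = ⟨(w ^ b) x.1, hmem⟩ := by
  have := retTime_eq w x hb hmem hmin
  simp [fr, this]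

lemma inv_pow_apply (w : Perm (Fin n)) (x : Fin n) {m a : ℕ} (h : m ≤ a) :
    (w⁻¹ ^ m) ((w ^ a) x) = (w ^ (a - m)) x := by
  have : (w ^ m) ((w ^ (a - m)) x) = (w ^ a) x := by
    rw [← Perm.mul_apply, ← pow_add]
    congr 2
    omega
  rw [inv_pow, ← this, ← Perm.mul_apply, inv_mul_cancel, Perm.one_apply]

lemma fr_coe (w : Perm (Fin n)) (x : S n k) :
    (fr w x).1 = (w ^ retTime w x) x.1 := rfl

lemma fr_inv_fr (w : Perm (Fin n)) (x : S n k) : fr w⁻¹ (fr w x) = x := by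
  set a := retTime w x with ha
  have key : ∀ m, m ≤ a → (w⁻¹ ^ m) ((fr w x).1) = (w ^ (a - m)) x.1 := by
    intro m hm
    rw [fr_coe]
    exact inv_pow_apply w x.1 hm
  have hmem : (((w⁻¹ ^ a) ((fr w x).1) : Fin n) : ℕ) < k := by
    rw [key a le_rfl]
    simpa using x.2
  have h : fr w⁻¹ (fr w x) = ⟨(w⁻¹ ^ a) ((fr w x).1), hmem⟩ :=
    fr_eq w⁻¹ (fr w x) (retTime_pos w x) hmem (fun m h1 h2 => by
      rw [key m h2.le]
      exact retTime_min w x (by omega) (by omega))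
  rw [h]
  apply Subtype.ext
  show (w⁻¹ ^ a) ((fr w x).1) = x.1
  rw [key a le_rfl]
  simp

/-- The induced permutation on `S n k`. -/
noncomputable def R (w : Perm (Fin n)) : Perm (S n k) where
  toFun := fr w
  invFun := fr w⁻¹
  left_inv := fr_inv_fr w
  right_inv := fun x => by
    have := fr_inv_fr w⁻¹ x
    rwa [inv_inv] at this

lemma R_coe (w : Perm (Fin n)) (x : S n k) : R w x = fr w x := rfl

lemma R_mul (w : Perm (Fin n)) (g : Perm (S n k)) :
    R (w * Perm.ofSubtype g) = R w * g := by
  refine Equiv.ext fun x => Subtype.ext ?_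
  show (fr (w * Perm.ofSubtype g) x).1 = (fr w (g x)).1
  set a := retTime w (g x) with ha
  have key : ∀ m, 1 ≤ m → m ≤ a →
      ((w * Perm.ofSubtype g) ^ m) x.1 = (w ^ m) ((g x).1) := by
    intro m h1 h2
    induction m with
    | zero => omega
    | succ m ih =>
      rcases Nat.eq_zero_or_pos m with hm | hm
      · subst hm
        simp [Perm.mul_apply, Perm.ofSubtype_apply_of_mem g x.2]
      · have hmle : m ≤ a := by omega
        have hnot : ¬ (((w ^ m) ((g x).1) : Fin n) : ℕ) < k :=
          retTime_min w (g x) hm (by omega)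
        rw [pow_succ', Perm.mul_apply, ih hm hmle, pow_succ', Perm.mul_apply,
          Perm.mul_apply, Perm.ofSubtype_apply_of_not_mem g hnot]
  have hmem : ((((w * Perm.ofSubtype g) ^ a) x.1 : Fin n) : ℕ) < k := by
    rw [key a (retTime_pos w (g x)) le_rfl]
    exact retTime_mem w (g x)
  have h : fr (w * Perm.ofSubtype g) x = ⟨((w * Perm.ofSubtype g) ^ a) x.1, hmem⟩ :=
    fr_eq _ x (retTime_pos w (g x)) hmem (fun m h1 h2 => by
      rw [key m h1 h2.le]
      exact retTime_min w (g x) h1 h2)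
  rw [h]
  show ((w * Perm.ofSubtype g) ^ a) x.1 = (fr w (g x)).1
  rw [key a (retTime_pos w (g x)) le_rfl, fr_coe]

lemma R_pow (w : Perm (Fin n)) (t : ℕ) (x : S n k) :
    ∃ m : ℕ, (((R w) ^ t) x).1 = (w ^ m) x.1 := by
  induction t with
  | zero => exact ⟨0, by simp⟩
  | succ t ih =>
    obtain ⟨m, hm⟩ := ih
    refine ⟨retTime w (((R w) ^ t) x) + m, ?_⟩
    rw [pow_succ', Perm.mul_apply]
    show (fr w (((R w) ^ t) x)).1 = _
    rw [fr_coe, hm, ← Perm.mul_apply, ← pow_add]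

lemma exists_R_pow (w : Perm (Fin n)) :
    ∀ m (x y : S n k), y.1 = (w ^ m) x.1 → ∃ t, ((R w) ^ t) x = y := by
  intro m
  induction m using Nat.strong_induction_on with
  | _ m ih =>
    intro x y hy
    rcases Nat.eq_zero_or_pos m with hm | hm
    · subst hm
      exact ⟨0, by simpa using (Subtype.ext (by simpa using hy)).symm⟩
    · have hma : retTime w x ≤ m := Nat.find_min' _ ⟨hm, by rw [← hy]; exact y.2⟩
      set a := retTime w x with ha
      have hpos : 0 < a := retTime_pos w x
      have hstep : y.1 = (w ^ (m - a)) ((fr w x).1) := by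
        rw [fr_coe, ← Perm.mul_apply, ← pow_add, hy]
        congr 2
        omega
      obtain ⟨t, ht⟩ := ih (m - a) (by omega) (fr w x) y hstep
      refine ⟨t + 1, ?_⟩
      rw [pow_succ, Perm.mul_apply]
      show ((R w) ^ t) (fr w x) = y
      exact ht

lemma sameCycle_iff (w : Perm (Fin n)) (x y : S n k) :
    w.SameCycle x.1 y.1 ↔ (R w).SameCycle x y := by
  constructor
  · intro h
    obtain ⟨m, -, hm⟩ := h.exists_pow_eq'
    obtain ⟨t, ht⟩ := exists_R_pow w m x y hm.symm
    exact ⟨t, by rw [zpow_natCast, ht]⟩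
  · intro h
    obtain ⟨t, -, ht⟩ := h.exists_pow_eq'
    obtain ⟨m, hm⟩ := R_pow w t x
    rw [ht] at hm
    exact ⟨m, by rw [zpow_natCast, ← hm]⟩

section FullCycles

open Fin.NatCast

lemma rot_pow {k : ℕ} [NeZero k] (m : ℕ) (i : Fin k) :
    ((Equiv.addRight (1 : Fin k)) ^ m) i = i + (m : Fin k) := by
  induction m with
  | zero => simp
  | succ m ih =>
    rw [pow_succ', Perm.mul_apply, ih]
    simp [Equiv.coe_addRight, Nat.cast_succ, add_assoc]

lemma card_fullCycles_mul {β : Type} [Fintype β] [DecidableEq β] (x0 : β) {k : ℕ}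
    (hk : 1 ≤ k) (hcard : Fintype.card β = k) :
    (univ.filter (fun σ : Perm β => ∀ j, σ.SameCycle x0 j)).card * k = k.factorial := by
  haveI : NeZero k := ⟨by omega⟩
  set rot : Perm (Fin k) := Equiv.addRight (1 : Fin k) with hrot
  have conj_pow : ∀ (f : Fin k ≃ β) (m : ℕ) (y : β),
      (((f.symm.trans rot).trans f : Perm β) ^ m) y = f ((rot ^ m) (f.symm y)) := by
    intro f m y
    induction m with
    | zero => simp
    | succ m ih =>
      rw [pow_succ', Perm.mul_apply, ih, pow_succ', Perm.mul_apply]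
      simp [Equiv.trans_apply]
  have full : ∀ f : Fin k ≃ β, ∀ j : β,
      Equiv.Perm.SameCycle ((f.symm.trans rot).trans f) x0 j := by
    intro f j
    refine ⟨((f.symm j) - (f.symm x0)).val, ?_⟩
    rw [zpow_natCast, conj_pow, rot_pow, Fin.cast_val_eq_self]
    rw [add_comm, sub_add_cancel]
    simp
  set Θ : (Fin k ≃ β) → {σ : Perm β // ∀ j, σ.SameCycle x0 j} × β :=
    fun f => (⟨(f.symm.trans rot).trans f, full f⟩, f 0) with hΘ
  have key : ∀ f : Fin k ≃ β, ∀ i : Fin k,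
      f i = ((((f.symm.trans rot).trans f : Perm β)) ^ (i : ℕ)) (f 0) := by
    intro f i
    rw [conj_pow, rot_pow]
    simp [Fin.cast_val_eq_self]
  have Θinj : Function.Injective Θ := by
    intro f g h
    have h1 : ((f.symm.trans rot).trans f : Perm β) = (g.symm.trans rot).trans g :=
      congrArg (fun z => (z.1 : Perm β)) h
    have h2 : f 0 = g 0 := congrArg Prod.snd h
    refine Equiv.ext fun i => ?_
    rw [key f i, key g i, h1, h2]
  have Θsurj : Function.Surjective Θ := by
    rintro ⟨⟨σ, hσ⟩, x⟩
    have hC : σ.IsCycleOn ↑(univ : Finset β) := by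
      refine ⟨by simpa using σ.bijective.bijOn_univ, fun a _ b _ => (hσ a).symm.trans (hσ b)⟩
    have hcardu : #(univ : Finset β) = k := by simpa using hcard
    set g : Fin k → β := fun i => (σ ^ (i : ℕ)) x with hg
    have ginj : Function.Injective g := by
      intro i j hij
      have := (hC.pow_apply_eq_pow_apply (mem_univ x)).mp hij
      rw [hcardu] at this
      have hi := i.isLt
      have hj := j.isLt
      have := this.eq_of_lt_of_lt hi hj
      exact Fin.ext this
    have gsurj : Function.Surjective g := by
      intro y
      obtain ⟨m, hm, hmy⟩ := hC.exists_pow_eq (mem_univ x) (mem_univ y)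
      rw [hcardu] at hm
      exact ⟨⟨m, hm⟩, hmy⟩
    set f : Fin k ≃ β := Equiv.ofBijective g ⟨ginj, gsurj⟩ with hf
    have hfap : ∀ i, f i = (σ ^ (i : ℕ)) x := fun i => rfl
    refine ⟨f, ?_⟩
    have hf0 : f 0 = x := by rw [hfap]; simp
    have hσf : ((f.symm.trans rot).trans f : Perm β) = σ := by
      refine Equiv.ext fun y => ?_
      obtain ⟨i, rfl⟩ := f.surjective y
      have : ((f.symm.trans rot).trans f : Perm β) (f i) = f (rot i) := by
        simp [Equiv.trans_apply]
      rw [this, hfap, hfap]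
      have hmod : ((i + 1 : Fin k) : ℕ) ≡ (i : ℕ) + 1 [MOD k] := by
        have : ((i + 1 : Fin k) : ℕ) = ((i : ℕ) + ((1 : Fin k) : ℕ)) % k := Fin.val_add i 1
        rw [this]
        calc ((i : ℕ) + ((1 : Fin k) : ℕ)) % k
            ≡ (i : ℕ) + ((1 : Fin k) : ℕ) [MOD k] := Nat.mod_modEq _ _
          _ ≡ (i : ℕ) + 1 [MOD k] := by
              have h1 : ((1 : Fin k) : ℕ) = 1 % k := Fin.val_one' k
              rw [h1]
              exact (Nat.ModEq.refl _).add (Nat.mod_modEq 1 k)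
      have hrotval : (rot i : Fin k) = i + 1 := by
        simp [hrot, Equiv.coe_addRight]
      rw [hrotval]
      have hmod' : ((i + 1 : Fin k) : ℕ) ≡ (i : ℕ) + 1 [MOD #(univ : Finset β)] := by
        rw [hcardu]; exact hmod
      have h2 := (hC.pow_apply_eq_pow_apply (a := x) (mem_univ x)).mpr hmod'
      rw [h2, pow_succ, Perm.mul_apply, ← Perm.mul_apply, ← Perm.mul_apply,
        ← pow_succ, ← pow_succ']
    exact Prod.ext (Subtype.ext hσf) hf0
  have hbij : Function.Bijective Θ := ⟨Θinj, Θsurj⟩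
  have hcards := Fintype.card_of_bijective hbij
  rw [Fintype.card_equiv ((Fintype.equivFinOfCardEq hcard).symm)] at hcards
  rw [Fintype.card_prod, Fintype.card_subtype, hcard] at hcards
  simpa using hcards.symm

end FullCycles

end ProbAux

theorem prob_first_k_same_cycle (n k : ℕ) (hk : 1 ≤ k) (hkn : k ≤ n) :
    (Finset.univ.filter (fun w : Perm (Fin n) =>
        ∀ i : Fin n, (i : ℕ) < k → w.SameCycle ⟨0, by omega⟩ i)).card * k =
      n.factorial := by
  have hz0 : ((⟨0, by omega⟩ : Fin n) : ℕ) < k := by simp; omega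
  set x0 : ProbAux.S n k := ⟨⟨0, by omega⟩, hz0⟩ with hx0
  -- cardinality of `S n k`
  have eS : ProbAux.S n k ≃ Fin k :=
    { toFun := fun x => ⟨x.1, x.2⟩
      invFun := fun j => ⟨⟨j.1, by omega⟩, j.2⟩
      left_inv := fun x => by ext; rfl
      right_inv := fun j => by ext; rfl }
  have hcardS : Fintype.card (ProbAux.S n k) = k := by
    rw [Fintype.card_congr eS, Fintype.card_fin]
  -- fibers of R
  set Fib : Perm (ProbAux.S n k) → Finset (Perm (Fin n)) :=
    fun σ => univ.filter (fun w => ProbAux.R w = σ) with hFib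
  have hfib : ∀ σ τ : Perm (ProbAux.S n k), (Fib σ).card = (Fib τ).card := by
    intro σ τ
    refine Finset.card_bij' (fun w _ => w * Perm.ofSubtype (σ⁻¹ * τ))
      (fun u _ => u * Perm.ofSubtype (τ⁻¹ * σ)) ?_ ?_ ?_ ?_
    · intro w hw
      simp only [hFib, mem_filter] at hw ⊢
      refine ⟨mem_univ _, ?_⟩
      rw [ProbAux.R_mul, hw.2]
      group
    · intro u hu
      simp only [hFib, mem_filter] at hu ⊢
      refine ⟨mem_univ _, ?_⟩
      rw [ProbAux.R_mul, hu.2]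
      group
    · intro w _
      show w * Perm.ofSubtype (σ⁻¹ * τ) * Perm.ofSubtype (τ⁻¹ * σ) = w
      rw [mul_assoc, ← map_mul]
      have h : (σ⁻¹ * τ) * (τ⁻¹ * σ) = 1 := by group
      rw [h, map_one, mul_one]
    · intro u _
      show u * Perm.ofSubtype (τ⁻¹ * σ) * Perm.ofSubtype (σ⁻¹ * τ) = u
      rw [mul_assoc, ← map_mul]
      have h : (τ⁻¹ * σ) * (σ⁻¹ * τ) = 1 := by group
      rw [h, map_one, mul_one]
  set m := (Fib 1).card with hm
  have hfib1 : ∀ σ : Perm (ProbAux.S n k), (Fib σ).card = m := fun σ => hfib σ 1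
  -- total count
  have htot : n.factorial = k.factorial * m := by
    have h1 : (univ : Finset (Perm (Fin n))).card =
        ∑ σ ∈ (univ : Finset (Perm (ProbAux.S n k))), (Fib σ).card :=
      Finset.card_eq_sum_card_fiberwise (fun w _ => mem_univ (ProbAux.R w))
    rw [Finset.card_univ, Fintype.card_perm, Fintype.card_fin] at h1
    rw [h1]
    rw [Finset.sum_congr rfl (fun σ _ => hfib1 σ), Finset.sum_const, smul_eq_mul,
      Finset.card_univ, Fintype.card_perm, hcardS]
  -- the set A
  set A := (Finset.univ.filter (fun w : Perm (Fin n) =>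
      ∀ i : Fin n, (i : ℕ) < k → w.SameCycle ⟨0, by omega⟩ i)) with hA
  set C := (univ.filter (fun σ : Perm (ProbAux.S n k) => ∀ j, σ.SameCycle x0 j)) with hC
  have hmemA : ∀ w : Perm (Fin n), w ∈ A ↔ ∀ j : ProbAux.S n k,
      (ProbAux.R w).SameCycle x0 j := by
    intro w
    rw [hA, mem_filter]
    constructor
    · intro hw j
      exact (ProbAux.sameCycle_iff w x0 j).mp (hw.2 j.1 j.2)
    · intro hw
      refine ⟨mem_univ _, fun i hi => ?_⟩
      exact (ProbAux.sameCycle_iff w x0 ⟨i, hi⟩).mpr (hw ⟨i, hi⟩)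
  have hAc : A.card = C.card * m := by
    have h1 : A.card = ∑ σ ∈ C, (A.filter (fun w => ProbAux.R w = σ)).card := by
      refine Finset.card_eq_sum_card_fiberwise (fun w hw => ?_)
      rw [hC, mem_coe, mem_filter]
      exact ⟨mem_univ _, (hmemA w).mp hw⟩
    have h2 : ∀ σ ∈ C, A.filter (fun w => ProbAux.R w = σ) = Fib σ := by
      intro σ hσ
      rw [hC, mem_filter] at hσ
      ext w
      simp only [hFib, mem_filter]
      constructor
      · rintro ⟨-, h⟩
        exact ⟨mem_univ _, h⟩
      · rintro ⟨-, h⟩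
        refine ⟨(hmemA w).mpr ?_, h⟩
        rw [h]
        exact hσ.2
    rw [h1, Finset.sum_congr rfl (fun σ hσ => by rw [h2 σ hσ, hfib1 σ]),
      Finset.sum_const, smul_eq_mul]
  -- full cycle count
  have hfc : C.card * k = k.factorial := ProbAux.card_fullCycles_mul x0 hk hcardS
  rw [hAc]
  calc C.card * m * k = C.card * k * m := by ring
    _ = k.factorial * m := by rw [hfc]
    _ = n.factorial := htot.symm
end
end

section
/- Let g(t) be a complex polynomial of degree exactly d ≤ n−1 all of whose zeros lie on the unit circle |z| = 1, and suppose 1 is a zero of g of multiplicity m ≥ 0. Let E be the backward shift operator and P(q) = g(E)(q+n−1)_n where (a)_n is the falling factorial. Then P(q) = (q+n−d−1)_{n−d} · Q(q) where Q is a polynomial of degree d−m all of whose zeros have real part (d−n+1)/2. -/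
open Polynomial
noncomputable section

/-- `g(E)` applied to `f`, where `E` is the backward shift `(Ef)(q) = f(q-1)`. -/
def applyShift (g f : Polynomial ℂ) : Polynomial ℂ :=
  ∑ k ∈ Finset.range (g.natDegree + 1), C (g.coeff k) * f.comp (X - C (k : ℂ))

/-- The falling factorial `(q+m-1)_m = (q+m-1)(q+m-2)⋯q` as a polynomial in `q`. -/
def fallingPoly (m : ℕ) : Polynomial ℂ :=
  ∏ i ∈ Finset.range m, (X + C (i : ℂ))

def shiftE : Module.End ℂ (Polynomial ℂ) :=
  (Polynomial.aeval (Polynomial.X - Polynomial.C 1 : Polynomial ℂ)).toLinearMap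

lemma shiftE_apply (f : Polynomial ℂ) : shiftE f = f.comp (X - C 1) := rfl

lemma shiftE_pow_apply (k : ℕ) (f : Polynomial ℂ) :
    (shiftE ^ k) f = f.comp (X - C (k : ℂ)) := by
  induction k with
  | zero => simp
  | succ k ih =>
    rw [pow_succ', Module.End.mul_apply, ih, shiftE_apply, Polynomial.comp_assoc]
    congr 1
    simp only [sub_comp, X_comp, C_comp]
    push_cast
    rw [C_add]
    ring

lemma applyShift_eq (g f : Polynomial ℂ) :
    applyShift g f = (Polynomial.aeval shiftE g) f := by
  rw [Polynomial.aeval_eq_sum_range]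
  rw [LinearMap.coe_sum, Finset.sum_apply]
  refine Finset.sum_congr rfl fun k _ => ?_
  rw [LinearMap.smul_apply, shiftE_pow_apply, smul_eq_C_mul]

lemma abs_le_abs_of_normSq {a b : ℂ} (h : Complex.normSq a ≤ Complex.normSq b) :
    ‖a‖ ≤ ‖b‖ := by
  rw [Complex.norm_def, Complex.norm_def]
  exact Real.sqrt_le_sqrt h

lemma abs_lt_abs_of_normSq {a b : ℂ} (h : Complex.normSq a < Complex.normSq b) :
    ‖a‖ < ‖b‖ := by
  rw [Complex.norm_def, Complex.norm_def]
  exact Real.sqrt_lt_sqrt (Complex.normSq_nonneg a) h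

lemma comp_coeff_pred (F : Polynomial ℂ) (M : ℕ) (hM : 1 ≤ M) (hdeg : F.natDegree ≤ M) :
    (F.comp (X - C 1)).coeff (M - 1) = F.coeff (M - 1) - M * F.coeff M := by
  have h1 : (X - C (1 : ℂ)) = X + C (-1) := by
    rw [map_neg]; ring
  rw [h1, ← taylor_apply, taylor_coeff]
  have hd : (Polynomial.hasseDeriv (M - 1) F).natDegree < 2 := by
    have h := Polynomial.natDegree_hasseDeriv_le F (M - 1)
    omega
  rw [Polynomial.eval_eq_sum_range' hd]
  rw [Finset.sum_range_succ, Finset.sum_range_one]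
  rw [Polynomial.hasseDeriv_coeff, Polynomial.hasseDeriv_coeff]
  have e1 : 1 + (M - 1) = M := by omega
  have e0 : 0 + (M - 1) = M - 1 := by omega
  rw [e1, e0, Nat.choose_self]
  have e2 : M.choose (M - 1) = M := by
    have := Nat.choose_symm (Nat.sub_le M 1) (n := M)
    rw [Nat.sub_sub_self hM] at this
    rw [← this, Nat.choose_one_right]
  rw [e2]
  push_cast
  ring

lemma comp_coeff_top (F : Polynomial ℂ) :
    (F.comp (X - C 1)).coeff F.natDegree = F.leadingCoeff := by
  have hdc : (F.comp (X - C 1)).natDegree = F.natDegree := by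
    rw [natDegree_comp, natDegree_X_sub_C, mul_one]
  have hlc : (F.comp (X - C 1)).leadingCoeff = F.leadingCoeff := by
    rw [leadingCoeff_comp (by rw [natDegree_X_sub_C]; exact one_ne_zero)]
    rw [(monic_X_sub_C (1 : ℂ)).leadingCoeff, one_pow, mul_one]
  rw [← hlc, Polynomial.leadingCoeff, hdc]

lemma comp_coeff_gt (F : Polynomial ℂ) {k : ℕ} (hk : F.natDegree < k) :
    (F.comp (X - C 1)).coeff k = 0 := by
  apply Polynomial.coeff_eq_zero_of_natDegree_lt
  rw [natDegree_comp, natDegree_X_sub_C, mul_one]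
  exact hk

lemma deg_step_ne_one (F : Polynomial ℂ) (hF : F ≠ 0) {α : ℂ} (hα : α ≠ 1) :
    (F.comp (X - C 1) - C α * F).natDegree = F.natDegree ∧
      F.comp (X - C 1) - C α * F ≠ 0 := by
  have hco : (F.comp (X - C 1) - C α * F).coeff F.natDegree = (1 - α) * F.leadingCoeff := by
    rw [coeff_sub, comp_coeff_top, coeff_C_mul, Polynomial.leadingCoeff]
    ring
  have hne : (F.comp (X - C 1) - C α * F).coeff F.natDegree ≠ 0 := by
    rw [hco]
    exact mul_ne_zero (sub_ne_zero.mpr (Ne.symm hα)) (leadingCoeff_ne_zero.mpr hF)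
  have hle : (F.comp (X - C 1) - C α * F).natDegree ≤ F.natDegree := by
    refine le_trans (natDegree_sub_le _ _) (max_le ?_ (natDegree_C_mul_le α F))
    rw [natDegree_comp, natDegree_X_sub_C, mul_one]
  exact ⟨le_antisymm hle (le_natDegree_of_ne_zero hne),
    fun h => hne (by rw [h, coeff_zero])⟩

lemma deg_step_one (F : Polynomial ℂ) (hF : F ≠ 0) (hM : 1 ≤ F.natDegree) :
    (F.comp (X - C 1) - F).natDegree = F.natDegree - 1 ∧ F.comp (X - C 1) - F ≠ 0 := by
  set M := F.natDegree with hMdef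
  have hco : (F.comp (X - C 1) - F).coeff (M - 1) = -(M * F.leadingCoeff) := by
    rw [coeff_sub, comp_coeff_pred F M hM le_rfl, Polynomial.leadingCoeff, ← hMdef]
    ring
  have hne : (F.comp (X - C 1) - F).coeff (M - 1) ≠ 0 := by
    rw [hco]
    refine neg_ne_zero.mpr (mul_ne_zero ?_ (leadingCoeff_ne_zero.mpr hF))
    exact Nat.cast_ne_zero.mpr (by omega)
  have hle : (F.comp (X - C 1) - F).natDegree ≤ M - 1 := by
    rw [Polynomial.natDegree_le_iff_coeff_eq_zero]
    intro N hN
    rcases eq_or_lt_of_le (by omega : M ≤ N) with h | h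
    · rw [coeff_sub, ← h, comp_coeff_top, Polynomial.leadingCoeff, sub_self]
    · rw [coeff_sub, comp_coeff_gt F h, coeff_eq_zero_of_natDegree_lt h, sub_self]
  exact ⟨le_antisymm hle (le_natDegree_of_ne_zero hne),
    fun h => hne (by rw [h, coeff_zero])⟩

lemma step (K : ℕ) (R : Polynomial ℂ) (hR : R ≠ 0)
    (hroots : ∀ z : ℂ, R.IsRoot z → z.re = -(K : ℝ) / 2)
    {α : ℂ} (hα : ‖α‖ = 1) :
    ∃ S : Polynomial ℂ,
      ((∏ i ∈ Finset.range (K + 1), (X + C (i : ℂ))) * R).comp (X - C 1)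
          - C α * ((∏ i ∈ Finset.range (K + 1), (X + C (i : ℂ))) * R)
        = (∏ i ∈ Finset.range K, (X + C (i : ℂ))) * S ∧
      S ≠ 0 ∧
      S.natDegree = R.natDegree + (if α = 1 then 0 else 1) ∧
      ∀ z : ℂ, S.IsRoot z → z.re = (1 - (K : ℝ)) / 2 := by
  set P : Polynomial ℂ := ∏ i ∈ Finset.range K, (X + C (i : ℂ)) with hPdef
  set F : Polynomial ℂ := (∏ i ∈ Finset.range (K + 1), (X + C (i : ℂ))) * R with hFdef
  set S : Polynomial ℂ := (X - C 1) * R.comp (X - C 1) - C α * ((X + C (K : ℂ)) * R)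
    with hSdef
  have hProdDeg : ∀ M : ℕ, (∏ i ∈ Finset.range M, (X + C (i : ℂ))).natDegree = M := by
    intro M
    rw [natDegree_prod_of_monic _ _ fun (i : ℕ) _ => monic_X_add_C ((i : ℂ))]
    simp only [natDegree_X_add_C, Finset.sum_const, smul_eq_mul, mul_one, Finset.card_range]
  have hPmon : P.Monic := monic_prod_of_monic _ _ fun i _ => monic_X_add_C _
  have hP1mon : (∏ i ∈ Finset.range (K + 1), (X + C (i : ℂ))).Monic :=
    monic_prod_of_monic _ _ fun i _ => monic_X_add_C _
  have hF0 : F ≠ 0 := mul_ne_zero hP1mon.ne_zero hR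
  have hFdeg : F.natDegree = (K + 1) + R.natDegree := by
    rw [hFdef, natDegree_mul hP1mon.ne_zero hR, hProdDeg]
  have e0 : (∏ i ∈ Finset.range (K + 1), (X + C (i : ℂ))).comp (X - C 1)
      = P * (X - C 1) := by
    rw [comp_eq_aeval, map_prod, Finset.prod_range_succ']
    have h1 : ∀ i ∈ Finset.range K,
        (Polynomial.aeval (X - C (1 : ℂ))) (X + C (((i + 1 : ℕ)) : ℂ)) = X + C (i : ℂ) := by
      intro i _
      rw [map_add, aeval_X, aeval_C, Polynomial.algebraMap_eq]
      push_cast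
      rw [C_add, C_1]
      ring
    rw [Finset.prod_congr rfl h1]
    simp [hPdef]
  have hid : F.comp (X - C 1) - C α * F = P * S := by
    rw [hFdef, mul_comp, e0, Finset.prod_range_succ, hSdef, hPdef]
    ring
  have hmain : S ≠ 0 ∧ S.natDegree = R.natDegree + (if α = 1 then 0 else 1) := by
    by_cases hα1 : α = 1
    · obtain ⟨hd1, hn1⟩ := deg_step_one F hF0 (by omega)
      have hid2 : F.comp (X - C 1) - F = P * S := by rw [← hid, hα1, C_1, one_mul]
      have hS0 : S ≠ 0 := fun h => hn1 (by rw [hid2, h, mul_zero])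
      have hdeq : (P * S).natDegree = F.natDegree - 1 := by rw [← hid2, hd1]
      rw [natDegree_mul hPmon.ne_zero hS0, hProdDeg K] at hdeq
      refine ⟨hS0, ?_⟩
      rw [if_pos hα1]
      omega
    · obtain ⟨hd1, hn1⟩ := deg_step_ne_one F hF0 hα1
      have hS0 : S ≠ 0 := fun h => hn1 (by rw [hid, h, mul_zero])
      have hdeq : (P * S).natDegree = F.natDegree := by rw [← hid, hd1]
      rw [natDegree_mul hPmon.ne_zero hS0, hProdDeg K] at hdeq
      refine ⟨hS0, ?_⟩
      rw [if_neg hα1]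
      omega
  refine ⟨S, hid, hmain.1, hmain.2, ?_⟩
  intro z hz
  have heval : (z - 1) * R.eval (z - 1) = α * ((z + K) * R.eval z) := by
    have h0 : S.eval z = 0 := hz
    rw [hSdef] at h0
    simp only [eval_sub, eval_mul, eval_add, eval_comp, eval_C, eval_X, eval_one] at h0
    linear_combination h0
  have hsplitR : R.roots.card = R.natDegree :=
    (splits_iff_card_roots).mp (IsAlgClosed.splits R)
  have hfac := C_leadingCoeff_mul_prod_multiset_X_sub_C hsplitR
  have hevalR : ∀ w : ℂ, ‖R.eval w‖
      = ‖R.leadingCoeff‖ * (R.roots.map fun ρ => ‖w - ρ‖).prod := by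
    intro w
    conv_lhs => rw [← hfac]
    rw [eval_mul, eval_C, norm_mul]
    congr 1
    rw [eval_multiset_prod, Multiset.map_map]
    rw [show ‖(Multiset.map (eval w ∘ fun a => X - C a) R.roots).prod‖ = _ from
      map_multiset_prod (normHom : ℂ →*₀ ℝ) _]
    rw [Multiset.map_map]
    congr 1
    apply Multiset.map_congr rfl
    intro ρ _
    simp
  have hlR : 0 < ‖R.leadingCoeff‖ := norm_pos_iff.mpr (leadingCoeff_ne_zero.mpr hR)
  have hrootre : ∀ ρ ∈ R.roots, ρ.re = -(K : ℝ) / 2 := fun ρ h =>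
    hroots ρ (mem_roots'.mp h).2
  have habs_eq : ‖z - 1‖ * ‖R.eval (z - 1)‖
      = ‖z + K‖ * ‖R.eval z‖ := by
    have h2 := congrArg Norm.norm heval
    rwa [norm_mul, norm_mul, norm_mul, hα, one_mul] at h2
  rw [hevalR, hevalR] at habs_eq
  set AlR := ‖R.leadingCoeff‖
  set P1 := (R.roots.map fun ρ => ‖z - 1 - ρ‖).prod with hP1
  set P2 := (R.roots.map fun ρ => ‖z - ρ‖).prod with hP2
  by_contra hne
  rcases lt_or_gt_of_ne hne with hlt | hgt
  · -- z.re < (1-K)/2 : RHS < LHS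
    have k1 : ‖z + K‖ < ‖z - 1‖ := by
      apply abs_lt_abs_of_normSq
      simp only [Complex.normSq_apply, Complex.add_re, Complex.sub_re, Complex.add_im,
        Complex.sub_im, Complex.one_re, Complex.one_im, Complex.natCast_re, Complex.natCast_im]
      have hK0 : (0 : ℝ) ≤ (K : ℝ) := Nat.cast_nonneg K
      nlinarith [hlt]
    have k2 : ∀ ρ ∈ R.roots, ‖z - ρ‖ ≤ ‖z - 1 - ρ‖ := by
      intro ρ h
      apply abs_le_abs_of_normSq
      have hre := hrootre ρ h
      simp only [Complex.normSq_apply, Complex.sub_re, Complex.sub_im, Complex.one_re,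
        Complex.one_im]
      rw [hre]
      nlinarith [hlt]
    have k3 : ∀ ρ ∈ R.roots, 0 < ‖z - 1 - ρ‖ := by
      intro ρ h
      apply norm_pos_iff.mpr
      intro h0
      have hre0 : (z - 1 - ρ).re = 0 := by rw [h0]; simp
      have hK0 : (0 : ℝ) ≤ (K : ℝ) := Nat.cast_nonneg K
      rw [Complex.sub_re, Complex.sub_re, Complex.one_re, hrootre ρ h] at hre0
      linarith
    have p2le : P2 ≤ P1 := by
      rw [hP1, hP2]
      exact Multiset.prod_map_le_prod_map₀ _ _ (fun ρ _ => norm_nonneg _) k2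
    have p1pos : 0 < P1 := by
      rw [hP1]
      apply Multiset.prod_pos
      intro x hx
      obtain ⟨ρ, hρ, rfl⟩ := Multiset.mem_map.mp hx
      exact k3 ρ hρ
    have c1 : ‖z + K‖ * (AlR * P2) ≤ ‖z + K‖ * (AlR * P1) := by
      apply mul_le_mul_of_nonneg_left _ (norm_nonneg _)
      exact mul_le_mul_of_nonneg_left p2le hlR.le
    have c2 : ‖z + K‖ * (AlR * P1) < ‖z - 1‖ * (AlR * P1) := by
      apply mul_lt_mul_of_pos_right k1
      positivity
    linarith
  · -- z.re > (1-K)/2 : LHS < RHS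
    have k1 : ‖z - 1‖ < ‖z + K‖ := by
      apply abs_lt_abs_of_normSq
      simp only [Complex.normSq_apply, Complex.add_re, Complex.sub_re, Complex.add_im,
        Complex.sub_im, Complex.one_re, Complex.one_im, Complex.natCast_re, Complex.natCast_im]
      have hK0 : (0 : ℝ) ≤ (K : ℝ) := Nat.cast_nonneg K
      nlinarith [hgt]
    have k2 : ∀ ρ ∈ R.roots, ‖z - 1 - ρ‖ ≤ ‖z - ρ‖ := by
      intro ρ h
      apply abs_le_abs_of_normSq
      have hre := hrootre ρ h
      simp only [Complex.normSq_apply, Complex.sub_re, Complex.sub_im, Complex.one_re,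
        Complex.one_im]
      rw [hre]
      nlinarith [hgt]
    have k3 : ∀ ρ ∈ R.roots, 0 < ‖z - ρ‖ := by
      intro ρ h
      apply norm_pos_iff.mpr
      intro h0
      have hre0 : (z - ρ).re = 0 := by rw [h0]; simp
      rw [Complex.sub_re, hrootre ρ h] at hre0
      linarith
    have p2le : P1 ≤ P2 := by
      rw [hP1, hP2]
      exact Multiset.prod_map_le_prod_map₀ _ _ (fun ρ _ => norm_nonneg _) k2
    have p2pos : 0 < P2 := by
      rw [hP2]
      apply Multiset.prod_pos
      intro x hx
      obtain ⟨ρ, hρ, rfl⟩ := Multiset.mem_map.mp hx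
      exact k3 ρ hρ
    have c1 : ‖z - 1‖ * (AlR * P1) ≤ ‖z - 1‖ * (AlR * P2) := by
      apply mul_le_mul_of_nonneg_left _ (norm_nonneg _)
      exact mul_le_mul_of_nonneg_left p2le hlR.le
    have c2 : ‖z - 1‖ * (AlR * P2) < ‖z + K‖ * (AlR * P2) := by
      apply mul_lt_mul_of_pos_right k1
      positivity
    linarith

lemma keyC (n : ℕ) (s : Multiset ℂ) (hmem : ∀ α ∈ s, ‖α‖ = 1)
    (hcard : Multiset.card s < n) :
    ∃ R : Polynomial ℂ,
      (Polynomial.aeval shiftE ((s.map fun a => X - C a).prod)) (fallingPoly n)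
        = (∏ i ∈ Finset.range (n - Multiset.card s), (X + C (i : ℂ))) * R ∧
      R ≠ 0 ∧ R.natDegree = Multiset.card s - s.count 1 ∧
      ∀ z : ℂ, R.IsRoot z → z.re = ((Multiset.card s : ℝ) - n + 1) / 2 := by
  classical
  induction s using Multiset.induction_on with
  | empty =>
    refine ⟨1, ?_, one_ne_zero, by simp, ?_⟩
    · simp [fallingPoly]
    · intro z hz
      simp [IsRoot] at hz
  | cons a s ih =>
    have hmem' : ∀ α ∈ s, ‖α‖ = 1 := fun α h => hmem α (Multiset.mem_cons_of_mem h)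
    have hcards : Multiset.card s < n := by
      rw [Multiset.card_cons] at hcard; omega
    obtain ⟨R, hRe, hR0, hRdeg, hRroots⟩ := ih hmem' hcards
    have hNK : n - Multiset.card s = (n - Multiset.card s - 1) + 1 := by omega
    set K := n - Multiset.card s - 1 with hKdef
    have hcast : (K : ℝ) + 1 = (n : ℝ) - Multiset.card s := by
      have : ((K + 1 : ℕ) : ℝ) = ((n - Multiset.card s : ℕ) : ℝ) := by rw [← hNK]
      rw [Nat.cast_sub hcards.le] at this
      push_cast at this
      linarith
    have hα : ‖a‖ = 1 := hmem a (Multiset.mem_cons_self a s)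
    have hroots' : ∀ z : ℂ, R.IsRoot z → z.re = -(K : ℝ) / 2 := by
      intro z hz
      rw [hRroots z hz]
      linarith
    obtain ⟨S, hSid, hS0, hSdeg, hSroots⟩ := step K R hR0 hroots' hα
    rw [hNK] at hRe
    refine ⟨S, ?_, hS0, ?_, ?_⟩
    · rw [Multiset.map_cons, Multiset.prod_cons, map_mul, Module.End.mul_apply, hRe,
        map_sub, aeval_X, aeval_C, LinearMap.sub_apply, Module.algebraMap_end_apply,
        shiftE_apply, smul_eq_C_mul]
      have hcc : n - Multiset.card (a ::ₘ s) = K := by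
        rw [Multiset.card_cons]; omega
      rw [hcc]
      exact hSid
    · rw [Multiset.card_cons, Multiset.count_cons, hSdeg, hRdeg]
      have hcle := Multiset.count_le_card 1 s
      by_cases ha1 : a = 1
      · subst ha1
        simp only [Multiset.card_cons, if_true, reduceIte]
        omega
      · rw [if_neg ha1, if_neg (fun h => ha1 h.symm)]
        omega
    · intro z hz
      rw [hSroots z hz, Multiset.card_cons]
      push_cast
      linarith

theorem shift_falling_roots_low (n d m : ℕ) (g : Polynomial ℂ)
    (hdeg : g.degree = d) (hd : d < n)
    (hcirc : ∀ z : ℂ, g.IsRoot z → ‖z‖ = 1)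
    (hm : g.rootMultiplicity 1 = m) :
    ∃ Q : Polynomial ℂ,
      applyShift g (fallingPoly n) = (∏ i ∈ Finset.range (n - d), (X + C (i : ℂ))) * Q ∧
      Q.natDegree = d - m ∧
      ∀ z : ℂ, Q.IsRoot z → z.re = ((d : ℝ) - n + 1) / 2 := by
  classical
  have hg0 : g ≠ 0 := fun h => by simp [h] at hdeg
  have hgnat : g.natDegree = d := natDegree_eq_of_degree_eq_some hdeg
  have hsplit : g.roots.card = g.natDegree :=
    (splits_iff_card_roots).mp (IsAlgClosed.splits g)
  have hcardd : Multiset.card g.roots = d := by rw [hsplit, hgnat]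
  have hcard : Multiset.card g.roots < n := by rw [hcardd]; exact hd
  have hmemabs : ∀ α ∈ g.roots, ‖α‖ = 1 := fun α hα =>
    hcirc α (mem_roots'.mp hα).2
  obtain ⟨R, hRe, hR0, hRdeg, hRroots⟩ := keyC n g.roots hmemabs hcard
  have hfac := C_leadingCoeff_mul_prod_multiset_X_sub_C hsplit
  have hlc : g.leadingCoeff ≠ 0 := leadingCoeff_ne_zero.mpr hg0
  refine ⟨g.leadingCoeff • R, ?_, ?_, ?_⟩
  · have key : applyShift g (fallingPoly n)
        = g.leadingCoeff • ((∏ i ∈ Finset.range (n - d), (X + C (i : ℂ))) * R) := by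
      rw [applyShift_eq]
      conv_lhs => rw [← hfac]
      rw [map_mul, Module.End.mul_apply, aeval_C, Module.algebraMap_end_apply, hRe, hcardd]
    rw [key, smul_eq_C_mul, smul_eq_C_mul]
    ring
  · rw [smul_eq_C_mul, natDegree_C_mul hlc, hRdeg, hcardd, count_roots, hm]
  · intro z hz
    have h0 : (g.leadingCoeff • R).eval z = 0 := hz
    rw [smul_eq_C_mul, eval_mul, eval_C, mul_eq_zero] at h0
    rcases h0 with h0 | h0
    · exact absurd h0 hlc
    · rw [hRroots z h0, hcardd]
end
end
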